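/- For the linear model fixed point (x_c, y_c) = ((2−2q)/(4−3q), (1−q)/(4−3q)) with q ∈ [0,1), the point lies in the quadrangle Q of convex mosaics (i.e., satisfies y ≥ x/2, y ≥ 1/2 − x, y ≤ 1/3, y ≤ 1/2 − x/2) if and only if q ≤ 2/3. -/

import Mathlib

/-- The region `Q` of convex mosaics. -/
def Qregion (p : ℝ × ℝ) : Prop :=
  p.1 / 2 ≤ p.2 ∧ 1 / 2 - p.1 ≤ p.2 ∧ p.2 ≤ 1 / 3 ∧ p.2 ≤ 1 / 2 - p.1 / 2

/-- The linear model fixed point lies in `Q` iff `q ≤ 2/3`. -/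
theorem linear_fixed_point_in_Q_iff (q : ℝ) (hq0 : 0 ≤ q) (hq1 : q < 1) :
    Qregion ((2 - 2 * q) / (4 - 3 * q), (1 - q) / (4 - 3 * q)) ↔ q ≤ 2 / 3 := by
  have hd : (0:ℝ) < 4 - 3 * q := by linarith
  have hd' : (4 : ℝ) - 3 * q ≠ 0 := ne_of_gt hd
  unfold Qregion
  constructor
  · rintro ⟨-, h, -, -⟩
    rw [sub_le_iff_le_add, ← add_div, le_div_iff₀ hd] at h
    linarith
  · intro h
    refine ⟨?_, ?_, ?_, ?_⟩
    · rw [div_div, div_le_div_iff₀ (by linarith) hd]; nlinarith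
    · rw [sub_le_iff_le_add, ← add_div, le_div_iff₀ hd]; linarith
    · rw [div_le_iff₀ hd]; nlinarith
    · rw [div_div, le_sub_iff_add_le, div_add_div _ _ hd' (by positivity), div_le_iff₀ (by positivity)]
      nlinarith
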